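/- Let q be a prime power and let integers satisfy 1 < u_2 < u_3 < k and 0 ≤ r < k. Let U_2, U_3 be subspaces of F_q^k with dim U_2 = u_2, dim U_3 = u_3 and dim(U_2 ∩ U_3) = 1, and set U_1 = U_2 ∩ U_3. Then for any integers v_2, v_3, the number of r-dimensional subspaces V of F_q^k with dim(U_1 ∩ V) = 0, dim(U_2 ∩ V) = v_2 and dim(U_3 ∩ V) = v_3 equals q^r times the number of (r+1)-dimensional subspaces Ṽ of F_q^k with dim(U_1 ∩ Ṽ) = 1, dim(U_2 ∩ Ṽ) = v_2 + 1 and dim(U_3 ∩ Ṽ) = v_3 + 1. -/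
import Mathlib


open Finset

/-- The Hamming weight of a vector. -/
noncomputable def hwt {F : Type} [Zero F] {n : ℕ} (c : Fin n → F) : ℕ :=
  Nat.card {i : Fin n // c i ≠ 0}

/-- The subcode support weight of a subspace of `F^n`. -/
noncomputable def suppWt {F : Type} [Field F] {n : ℕ} (X : Submodule F (Fin n → F)) : ℕ :=
  Nat.card {i : Fin n // ∃ x ∈ X, x i ≠ 0}

/-- The minimum Hamming distance of a linear code. -/
noncomputable def minDist {F : Type} [Field F] {n : ℕ} (C : Submodule F (Fin n → F)) : ℕ :=
  sInf {w | ∃ c ∈ C, c ≠ 0 ∧ hwt c = w}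

/-- The `r`-th generalized Hamming weight of a linear code. -/
noncomputable def ghw {F : Type} [Field F] {n : ℕ} (C : Submodule F (Fin n → F)) (r : ℕ) : ℕ :=
  sInf {w | ∃ U : Submodule F (Fin n → F), U ≤ C ∧ Module.finrank F ↥U = r ∧ suppWt U = w}

/-- `sswd C r j` = the number of `r`-dimensional subspaces `U` of `C` with support weight `j`. -/
noncomputable def sswd {F : Type} [Field F] {n : ℕ} (C : Submodule F (Fin n → F)) (r j : ℕ) : ℕ :=
  Nat.card {U : Submodule F (Fin n → F) // U ≤ C ∧ Module.finrank F ↥U = r ∧ suppWt U = j}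

/-- `wdist C j` = the number of codewords of `C` of Hamming weight `j`. -/
noncomputable def wdist {F : Type} [Field F] {n : ℕ} (C : Submodule F (Fin n → F)) (j : ℕ) : ℕ :=
  Nat.card {c : Fin n → F // c ∈ C ∧ hwt c = j}

/-- The q-ary Gaussian binomial coefficient `[k choose r]_q`. -/
def gbinom (q k r : ℕ) : ℕ :=
  (∏ i ∈ Finset.range r, (q ^ k - q ^ i)) / (∏ i ∈ Finset.range r, (q ^ r - q ^ i))

/-- Ceiling division of naturals: `cdiv a b = ⌈a/b⌉`. -/
def cdiv (a b : ℕ) : ℕ := (a + b - 1) / b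

set_option synthInstance.maxHeartbeats 1000000

open Module

/-- The set of projections onto `p` is equivalent to `Hom(M/p, p)`. -/
noncomputable def projEquiv {F M : Type*} [Field F] [AddCommGroup M] [Module F M]
    (p : Submodule F M) (f0 : M →ₗ[F] p) (hf0 : ∀ x : p, f0 x = x) :
    {f : M →ₗ[F] p // ∀ x : p, f x = x} ≃ ((M ⧸ p) →ₗ[F] p) where
  toFun f := p.liftQ (f.1 - f0) (by
    intro x hx
    simp [f.2 ⟨x, hx⟩, hf0 ⟨x, hx⟩])
  invFun g := ⟨f0 + g.comp p.mkQ, by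
    intro x
    have : p.mkQ x = 0 := (Submodule.Quotient.mk_eq_zero p).mpr x.2
    simp [this, hf0 x]⟩
  left_inv f := by
    apply Subtype.ext
    have := Submodule.liftQ_mkQ (f.1 - f0) (by
      intro x hx
      simp [f.2 ⟨x, hx⟩, hf0 ⟨x, hx⟩]) (p := p)
    ext x
    have hx := LinearMap.congr_fun this x
    simp only [LinearMap.comp_apply, LinearMap.sub_apply] at hx
    simp [hx]
  right_inv g := by
    apply Submodule.linearMap_qext
    ext x
    simp

lemma count_compl {F M : Type*} [Field F] [Fintype F] [AddCommGroup M] [Module F M]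
    [FiniteDimensional F M] (p : Submodule F M) :
    Nat.card {W : Submodule F M // W ⊓ p = ⊥ ∧ W ⊔ p = ⊤} =
      Fintype.card F ^ ((finrank F M - finrank F p) * finrank F p) := by
  have e1 : {W : Submodule F M // W ⊓ p = ⊥ ∧ W ⊔ p = ⊤} ≃ {q : Submodule F M // IsCompl p q} :=
    Equiv.subtypeEquivRight (fun W => by
      rw [isCompl_iff, disjoint_iff, codisjoint_iff, inf_comm, sup_comm])
  obtain ⟨q0, hq0⟩ := p.exists_isCompl
  obtain ⟨f0, hf0⟩ := p.isComplEquivProj ⟨q0, hq0⟩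
  have e3 := projEquiv p f0 hf0
  have e : {W : Submodule F M // W ⊓ p = ⊥ ∧ W ⊔ p = ⊤} ≃ ((M ⧸ p) →ₗ[F] p) :=
    (e1.trans p.isComplEquivProj).trans e3
  haveI : Finite M := Module.finite_of_finite F
  haveI : Finite (M ⧸ p) := Quotient.finite _
  haveI : Finite (M ⧸ p →ₗ[F] ↥p) := FunLike.finite _
  haveI : Fintype ((M ⧸ p) →ₗ[F] p) := Fintype.ofFinite _
  rw [Nat.card_congr e, Nat.card_eq_fintype_card, card_eq_pow_finrank (K := F)]
  congr 1
  rw [Module.finrank_linearMap]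
  congr 1
  have := Submodule.finrank_quotient_add_finrank p
  omega

open Module

lemma fiber_card {F : Type} [Field F] [Fintype F] {k : ℕ}
    (U1 V' : Submodule F (Fin k → F)) (hle : U1 ≤ V') :
    Nat.card {V : Submodule F (Fin k → F) // V ⊓ U1 = ⊥ ∧ V ⊔ U1 = V'} =
      Fintype.card F ^ ((finrank F ↥V' - finrank F ↥U1) * finrank F ↥U1) := by
  set p : Submodule F ↥V' := U1.comap V'.subtype with hp
  have inj : Function.Injective V'.subtype := Subtype.coe_injective
  have mapinj := Submodule.map_injective_of_injective (f := V'.subtype) inj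
  have hmapp : p.map V'.subtype = U1 := by
    rw [hp, Submodule.map_comap_subtype, inf_eq_right.mpr hle]
  have e : {V : Submodule F (Fin k → F) // V ⊓ U1 = ⊥ ∧ V ⊔ U1 = V'} ≃
      {W : Submodule F ↥V' // W ⊓ p = ⊥ ∧ W ⊔ p = ⊤} := by
    refine
      { toFun := fun V => ⟨V.1.comap V'.subtype, ?_, ?_⟩
        invFun := fun W => ⟨W.1.map V'.subtype, ?_, ?_⟩
        left_inv := ?_
        right_inv := ?_ }
    · have hVle : V.1 ≤ V' := le_sup_left.trans (le_of_eq V.2.2)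
      apply mapinj
      rw [Submodule.map_inf _ inj, Submodule.map_comap_subtype, hmapp, Submodule.map_bot,
        inf_eq_right.mpr hVle, V.2.1]
    · have hVle : V.1 ≤ V' := le_sup_left.trans (le_of_eq V.2.2)
      apply mapinj
      rw [Submodule.map_sup, Submodule.map_comap_subtype, hmapp, Submodule.map_subtype_top,
        inf_eq_right.mpr hVle, V.2.2]
    · rw [← hmapp, ← Submodule.map_inf _ inj, W.2.1, Submodule.map_bot]
    · rw [← hmapp, ← Submodule.map_sup, W.2.2, Submodule.map_subtype_top]
    · intro V
      have hVle : V.1 ≤ V' := le_sup_left.trans (le_of_eq V.2.2)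
      apply Subtype.ext
      simp only [Submodule.map_comap_subtype]
      exact inf_eq_right.mpr hVle
    · intro W
      apply Subtype.ext
      simp only [Submodule.comap_map_eq_of_injective inj]
  rw [Nat.card_congr e, count_compl p]
  have : finrank F ↥p = finrank F ↥U1 := by
    rw [← hmapp]
    exact (Submodule.equivMapOfInjective V'.subtype inj p).finrank_eq
  rw [this]
/-- Lemma `xx14` (d): counting subspaces avoiding `U_1 = U_2 ∩ U_3` in
terms of subspaces containing it. -/
theorem stmt_12 (q : ℕ) (F : Type) [Field F] [Fintype F] (hq : Fintype.card F = q)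
    (k u2 u3 : ℕ) (h12 : 1 < u2) (h23 : u2 < u3) (h3k : u3 < k)
    (r : ℕ) (hr : r < k)
    (U2 U3 : Submodule F (Fin k → F))
    (hU2 : Module.finrank F ↥U2 = u2) (hU3 : Module.finrank F ↥U3 = u3)
    (hU23 : Module.finrank F ↥(U2 ⊓ U3) = 1)
    (v2 v3 : ℤ) :
    Nat.card {V : Submodule F (Fin k → F) //
        Module.finrank F ↥V = r ∧
        Module.finrank F ↥(U2 ⊓ U3 ⊓ V) = 0 ∧
        (Module.finrank F ↥(U2 ⊓ V) : ℤ) = v2 ∧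
        (Module.finrank F ↥(U3 ⊓ V) : ℤ) = v3} =
      q ^ r * Nat.card {V' : Submodule F (Fin k → F) //
        Module.finrank F ↥V' = r + 1 ∧
        Module.finrank F ↥(U2 ⊓ U3 ⊓ V') = 1 ∧
        (Module.finrank F ↥(U2 ⊓ V') : ℤ) = v2 + 1 ∧
        (Module.finrank F ↥(U3 ⊓ V') : ℤ) = v3 + 1} := by
  classical
  set U1 : Submodule F (Fin k → F) := U2 ⊓ U3 with hU1
  haveI : Finite (Submodule F (Fin k → F)) :=
    Finite.of_injective _ (SetLike.coe_injective (A := Submodule F (Fin k → F)))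
  have dimsup : ∀ W X : Submodule F (Fin k → F), W ⊓ X = ⊥ →
      finrank F ↥(W ⊔ X) = finrank F ↥W + finrank F ↥X := by
    intro W X h
    have h2 := Submodule.finrank_sup_add_finrank_inf_eq W X
    rw [h] at h2
    simpa using h2
  have key : ∀ (U V : Submodule F (Fin k → F)), U1 ≤ U → V ⊓ U1 = ⊥ →
      finrank F ↥(U ⊓ (V ⊔ U1)) = finrank F ↥(U ⊓ V) + 1 := by
    intro U V hU hV
    rw [← inf_sup_assoc_of_le V hU]
    have h2 : (U ⊓ V) ⊓ U1 = ⊥ := by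
      rw [eq_bot_iff, ← hV]
      exact inf_le_inf_right U1 inf_le_right
    rw [dimsup _ _ h2, hU23]
  set A := {V : Submodule F (Fin k → F) //
        finrank F ↥V = r ∧ finrank F ↥(U1 ⊓ V) = 0 ∧
        (finrank F ↥(U2 ⊓ V) : ℤ) = v2 ∧ (finrank F ↥(U3 ⊓ V) : ℤ) = v3} with hA
  set B := {V' : Submodule F (Fin k → F) //
        finrank F ↥V' = r + 1 ∧ finrank F ↥(U1 ⊓ V') = 1 ∧
        (finrank F ↥(U2 ⊓ V') : ℤ) = v2 + 1 ∧ (finrank F ↥(U3 ⊓ V') : ℤ) = v3 + 1} with hB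
  have hBle : ∀ V' : B, U1 ≤ V'.1 := by
    intro V'
    have h1 : U1 ⊓ V'.1 = U1 :=
      Submodule.eq_of_le_of_finrank_eq inf_le_left (by rw [V'.2.2.1, hU23])
    exact inf_eq_left.mp h1
  have e : A ≃ Σ V' : B, {V : Submodule F (Fin k → F) // V ⊓ U1 = ⊥ ∧ V ⊔ U1 = V'.1} := by
    refine
      { toFun := fun V => ⟨⟨V.1 ⊔ U1, ?_, ?_, ?_, ?_⟩,
          ⟨V.1, ?_, rfl⟩⟩
        invFun := fun x => ⟨x.2.1, ?_, ?_, ?_, ?_⟩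
        left_inv := fun V => rfl
        right_inv := ?_ }
    case _ =>
      have hbot : V.1 ⊓ U1 = ⊥ := by
        rw [inf_comm]; exact Submodule.finrank_eq_zero.mp V.2.2.1
      rw [dimsup _ _ hbot, V.2.1, hU23]
    case _ =>
      rw [inf_eq_left.mpr le_sup_right, hU23]
    case _ =>
      have hbot : V.1 ⊓ U1 = ⊥ := by
        rw [inf_comm]; exact Submodule.finrank_eq_zero.mp V.2.2.1
      rw [key U2 V.1 inf_le_left hbot]
      push_cast
      rw [V.2.2.2.1]
    case _ =>
      have hbot : V.1 ⊓ U1 = ⊥ := by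
        rw [inf_comm]; exact Submodule.finrank_eq_zero.mp V.2.2.1
      rw [key U3 V.1 inf_le_right hbot]
      push_cast
      rw [V.2.2.2.2]
    case _ =>
      rw [inf_comm]; exact Submodule.finrank_eq_zero.mp V.2.2.1
    -- invFun obligations
    case _ =>
      have h1 := dimsup x.2.1 U1 x.2.2.1
      rw [x.2.2.2, x.1.2.1, hU23] at h1
      omega
    case _ =>
      have h1 : U1 ⊓ x.2.1 = ⊥ := by rw [inf_comm]; exact x.2.2.1
      rw [h1, finrank_bot]
    case _ =>
      have h := x.1.2.2.2.1
      rw [← x.2.2.2, key U2 x.2.1 inf_le_left x.2.2.1] at h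
      push_cast at h
      linarith
    case _ =>
      have h := x.1.2.2.2.2
      rw [← x.2.2.2, key U3 x.2.1 inf_le_right x.2.2.1] at h
      push_cast at h
      linarith
    case _ =>
      rintro ⟨⟨V', hV'⟩, V, hV⟩
      have hV2' : V ⊔ U1 = V' := hV.2
      subst hV2'
      rfl
  rw [Nat.card_congr e]
  haveI : Fintype B := Fintype.ofFinite _
  haveI : ∀ V' : B, Fintype {V : Submodule F (Fin k → F) // V ⊓ U1 = ⊥ ∧ V ⊔ U1 = V'.1} :=
    fun _ => Fintype.ofFinite _
  rw [Nat.card_eq_fintype_card, Fintype.card_sigma]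
  have hfib : ∀ V' : B,
      Fintype.card {V : Submodule F (Fin k → F) // V ⊓ U1 = ⊥ ∧ V ⊔ U1 = V'.1} = q ^ r := by
    intro V'
    rw [← Nat.card_eq_fintype_card, fiber_card U1 V'.1 (hBle V'), hq, V'.2.1, hU23]
    norm_num
  rw [Finset.sum_congr rfl (fun V' _ => hfib V')]
  rw [Finset.sum_const, Finset.card_univ, smul_eq_mul, mul_comm, Nat.card_eq_fintype_card]
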